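/- Let G be a simple undirected graph with adjacency matrix A and let S be a summary of G determined by a partition {V_1,...,V_k} of V in which every part V_i with at least one internal edge satisfies |V_i| ≥ 2. Then the l1-reconstruction error satisfies the closed form RE(G|S) = Σ_{i=1}^{k} (4·e_i − 4·e_i² / C(n_i,2)) + Σ_{i=1}^{k} Σ_{j≠i} (2·e_{ij} − 2·e_{ij}² / (n_i·n_j)). -/

import Mathlib

/-!
Setting: `A : V → V → ℝ` is the (symmetric, 0/1-valued, zero-diagonal) adjacency matrix
of a finite simple undirected graph `G = (V,E)`, and `P : V → Fin k` assigns each vertex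
to its block of the partition `{V_1, …, V_k}`.
-/

open Finset

/-- `n_i`: the number of vertices in block `i`. -/
def blockCard {V : Type*} [Fintype V] {k : ℕ} (P : V → Fin k) (i : Fin k) : ℕ :=
  (Finset.univ.filter fun v => P v = i).card

/-- `e_i`: the number of edges of `G` with both endpoints in block `i`
(for a symmetric 0/1 matrix with zero diagonal, each such edge is counted twice in the
double sum, whence the division by `2`). -/
noncomputable def eIn {V : Type*} [Fintype V] {k : ℕ} (A : V → V → ℝ) (P : V → Fin k) (i : Fin k) : ℝ :=
  (∑ u ∈ Finset.univ.filter (fun v => P v = i),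
      ∑ v ∈ Finset.univ.filter (fun v => P v = i), A u v) / 2

/-- `e_{ij}`: the number of edges of `G` with one endpoint in block `i` and the other in
block `j` (for `i ≠ j`). -/
noncomputable def eCross {V : Type*} [Fintype V] {k : ℕ} (A : V → V → ℝ) (P : V → Fin k)
    (i j : Fin k) : ℝ :=
  ∑ u ∈ Finset.univ.filter (fun v => P v = i),
    ∑ v ∈ Finset.univ.filter (fun v => P v = j), A u v

/-- The expected adjacency matrix `Ā` of the summary determined by `P`. -/
noncomputable def Abar {V : Type*} [Fintype V] [DecidableEq V] {k : ℕ}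
    (A : V → V → ℝ) (P : V → Fin k) (u v : V) : ℝ :=
  if u = v then 0
  else if P u = P v then eIn A P (P u) / ((blockCard P (P u)).choose 2 : ℝ)
  else eCross A P (P u) (P v) / ((blockCard P (P u) : ℝ) * (blockCard P (P v) : ℝ))

/-- The `l₁`-reconstruction error `RE(G|S) = Σ_u Σ_v |Ā(u,v) − A(u,v)|`. -/
noncomputable def RE {V : Type*} [Fintype V] [DecidableEq V] {k : ℕ}
    (A : V → V → ℝ) (P : V → Fin k) : ℝ :=
  ∑ u : V, ∑ v : V, |Abar A P u v - A u v|

/-- Closed form for the `l₁`-reconstruction error: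
`RE(G|S) = Σ_i (4e_i − 4e_i²/C(n_i,2)) + Σ_i Σ_{j≠i} (2e_{ij} − 2e_{ij}²/(n_i n_j))`,
provided every block containing an internal edge has at least two vertices. -/
theorem re_closed_form {V : Type*} [Fintype V] [DecidableEq V] {k : ℕ}
    (A : V → V → ℝ) (P : V → Fin k)
    (hsym : ∀ u v, A u v = A v u)
    (h01 : ∀ u v, A u v = 0 ∨ A u v = 1)
    (hdiag : ∀ u, A u u = 0)
    (hnd : ∀ i : Fin k, eIn A P i ≠ 0 → 2 ≤ blockCard P i) :
    RE A P =
      (∑ i : Fin k,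
          (4 * eIn A P i - 4 * (eIn A P i) ^ 2 / ((blockCard P i).choose 2 : ℝ)))
        + ∑ i : Fin k, ∑ j ∈ Finset.univ.erase i,
            (2 * eCross A P i j
              - 2 * (eCross A P i j) ^ 2 / ((blockCard P i : ℝ) * (blockCard P j : ℝ))) := by
  classical
  set B : Fin k → Finset V := fun i => Finset.univ.filter (fun v => P v = i) with hB
  have hA0 : ∀ u v, 0 ≤ A u v := fun u v => by rcases h01 u v with h | h <;> simp [h]
  have hA1 : ∀ u v, A u v ≤ 1 := fun u v => by rcases h01 u v with h | h <;> simp [h]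
  -- bounds on eIn
  have heIn0 : ∀ i, 0 ≤ eIn A P i := fun i => by
    unfold eIn
    exact div_nonneg (Finset.sum_nonneg fun u _ => Finset.sum_nonneg fun v _ => hA0 u v)
      (by norm_num)
  have heIn_le : ∀ i, eIn A P i ≤ ((blockCard P i).choose 2 : ℝ) := by
    intro i
    have hsum : (∑ u ∈ B i, ∑ v ∈ B i, A u v) ≤ (blockCard P i : ℝ) * ((blockCard P i : ℝ) - 1) := by
      by_cases hn : blockCard P i = 0
      · have : B i = ∅ := Finset.card_eq_zero.mp hn
        simp [this, hn]
      · calc (∑ u ∈ B i, ∑ v ∈ B i, A u v)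
            ≤ ∑ u ∈ B i, ((blockCard P i : ℝ) - 1) := by
              apply Finset.sum_le_sum
              intro u hu
              have h2 : (∑ v ∈ B i, A u v) = ∑ v ∈ (B i).erase u, A u v :=
                (Finset.sum_erase _ (hdiag u)).symm
              rw [h2]
              calc ∑ v ∈ (B i).erase u, A u v ≤ ∑ v ∈ (B i).erase u, 1 :=
                    Finset.sum_le_sum fun v _ => hA1 u v
                _ = (((B i).erase u).card : ℝ) := by simp
                _ = ((blockCard P i - 1 : ℕ) : ℝ) := by rw [Finset.card_erase_of_mem hu]; rfl
                _ ≤ (blockCard P i : ℝ) - 1 := by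
                    have h1 : 1 ≤ blockCard P i := Nat.one_le_iff_ne_zero.mpr hn
                    push_cast [h1]
                    exact le_refl _
          _ = (blockCard P i : ℝ) * ((blockCard P i : ℝ) - 1) := by
              rw [Finset.sum_const, nsmul_eq_mul]; rfl
    unfold eIn
    rw [Nat.cast_choose_two]
    simp only [hB] at hsum ⊢
    linarith
  have heC0 : ∀ i j, 0 ≤ eCross A P i j := fun i j =>
    Finset.sum_nonneg fun u _ => Finset.sum_nonneg fun v _ => hA0 u v
  have heC_le : ∀ i j, eCross A P i j ≤ (blockCard P i : ℝ) * (blockCard P j : ℝ) := by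
    intro i j
    unfold eCross
    calc (∑ u ∈ B i, ∑ v ∈ B j, A u v) ≤ ∑ u ∈ B i, ∑ v ∈ B j, (1:ℝ) :=
          Finset.sum_le_sum fun u _ => Finset.sum_le_sum fun v _ => hA1 u v
      _ = (blockCard P i : ℝ) * (blockCard P j : ℝ) := by
          simp [blockCard, mul_comm]; rfl
  -- bounds on Abar
  have hAbar0 : ∀ u v, 0 ≤ Abar A P u v := by
    intro u v
    unfold Abar
    split_ifs
    · exact le_refl 0
    · exact div_nonneg (heIn0 _) (by positivity)
    · exact div_nonneg (heC0 _ _) (by positivity)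
  have hAbar1 : ∀ u v, Abar A P u v ≤ 1 := by
    intro u v
    unfold Abar
    split_ifs
    · exact zero_le_one
    · exact div_le_one_of_le₀ (heIn_le _) (by positivity)
    · exact div_le_one_of_le₀ (heC_le _ _) (by positivity)
  -- absolute value identity
  have habs : ∀ u v, |Abar A P u v - A u v|
      = A u v + Abar A P u v - 2 * A u v * Abar A P u v := by
    intro u v
    rcases h01 u v with h | h
    · rw [h, sub_zero, abs_of_nonneg (hAbar0 u v)]; ring
    · rw [h, abs_of_nonpos (by linarith [hAbar1 u v])]; ring
  -- fiberwise decomposition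
  have hfib : ∀ f : V → ℝ, ∑ u : V, f u = ∑ i : Fin k, ∑ u ∈ B i, f u := fun f =>
    (Finset.sum_fiberwise_of_maps_to (fun x _ => mem_univ (P x)) f).symm
  have hRE : RE A P = ∑ i : Fin k, ∑ j : Fin k, ∑ u ∈ B i, ∑ v ∈ B j,
      (A u v + Abar A P u v - 2 * A u v * Abar A P u v) := by
    unfold RE
    simp_rw [habs]
    rw [hfib (fun u => ∑ v : V, (A u v + Abar A P u v - 2 * A u v * Abar A P u v))]
    refine Finset.sum_congr rfl fun i _ => ?_
    rw [Finset.sum_congr rfl fun u (_ : u ∈ B i) =>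
      hfib (fun v => (A u v + Abar A P u v - 2 * A u v * Abar A P u v))]
    exact Finset.sum_comm
  -- block-diagonal term
  have hdiagterm : ∀ i : Fin k,
      (∑ u ∈ B i, ∑ v ∈ B i, (A u v + Abar A P u v - 2 * A u v * Abar A P u v))
      = 4 * eIn A P i - 4 * (eIn A P i) ^ 2 / ((blockCard P i).choose 2 : ℝ) := by
    intro i
    set C : ℝ := ((blockCard P i).choose 2 : ℝ) with hC
    set p : ℝ := eIn A P i / C with hp
    have hAbar_in : ∀ u ∈ B i, ∀ v ∈ B i, Abar A P u v = if u = v then 0 else p := by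
      intro u hu v hv
      have hu' : P u = i := (Finset.mem_filter.mp hu).2
      have hv' : P v = i := (Finset.mem_filter.mp hv).2
      by_cases h : u = v
      · simp [Abar, h]
      · simp [Abar, h, hu', hv', hp, hC]
    have hterm : ∀ u ∈ B i, ∀ v ∈ B i,
        A u v + Abar A P u v - 2 * A u v * Abar A P u v
        = A u v + (if u = v then 0 else p) - 2 * (A u v * p) := by
      intro u hu v hv
      rw [hAbar_in u hu v hv]
      by_cases h : u = v
      · simp [h, hdiag]
      · simp only [if_neg h]; ring
    rw [Finset.sum_congr rfl fun u hu => Finset.sum_congr rfl fun v hv => hterm u hu v hv]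
    have hS : (∑ u ∈ B i, ∑ v ∈ B i, A u v) = 2 * eIn A P i := by
      unfold eIn; simp only [hB]; ring
    have hIf : (∑ u ∈ B i, ∑ v ∈ B i, (if u = v then (0:ℝ) else p))
        = (blockCard P i : ℝ) * ((blockCard P i : ℝ) * p - p) := by
      rw [Finset.sum_congr rfl fun u hu => ?_]
      · rw [Finset.sum_const, nsmul_eq_mul]; rfl
      · have : ∀ v, (if u = v then (0:ℝ) else p) = p - (if u = v then p else 0) := by
          intro v; by_cases h : u = v <;> simp [h]
        simp_rw [this]
        rw [Finset.sum_sub_distrib, Finset.sum_const, nsmul_eq_mul,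
          Finset.sum_ite_eq (B i) u (fun _ => p), if_pos hu]
        rfl
    simp only [Finset.sum_add_distrib, Finset.sum_sub_distrib, ← Finset.mul_sum,
      ← Finset.sum_mul]
    rw [hS, hIf]
    by_cases he : eIn A P i = 0
    · simp [he, hp]
    · have hn := hnd i he
      have hCpos : (0:ℝ) < C := by
        rw [hC]
        exact_mod_cast Nat.cast_pos.mpr (Nat.choose_pos hn)
      have hrel : (blockCard P i : ℝ) * ((blockCard P i : ℝ) - 1) = 2 * C := by
        rw [hC, Nat.cast_choose_two]; ring
      rw [hp]
      field_simp
      linear_combination hrel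
  -- cross term
  have hcrossterm : ∀ i j : Fin k, j ≠ i →
      (∑ u ∈ B i, ∑ v ∈ B j, (A u v + Abar A P u v - 2 * A u v * Abar A P u v))
      = 2 * eCross A P i j
          - 2 * (eCross A P i j) ^ 2 / ((blockCard P i : ℝ) * (blockCard P j : ℝ)) := by
    intro i j hij
    set q : ℝ := eCross A P i j / ((blockCard P i : ℝ) * (blockCard P j : ℝ)) with hq
    have hAbar_cr : ∀ u ∈ B i, ∀ v ∈ B j, Abar A P u v = q := by
      intro u hu v hv
      have hu' : P u = i := (Finset.mem_filter.mp hu).2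
      have hv' : P v = j := (Finset.mem_filter.mp hv).2
      have huv : u ≠ v := by
        intro h; apply hij; rw [← hu', ← hv', h]
      have hP : ¬ P u = P v := by rw [hu', hv']; exact fun h => hij h.symm
      simp only [Abar, if_neg huv, if_neg hP]
      rw [hu', hv', hq]
    rw [Finset.sum_congr rfl fun u hu => Finset.sum_congr rfl fun v hv => by
      rw [hAbar_cr u hu v hv]]
    have hS : (∑ u ∈ B i, ∑ v ∈ B j, A u v) = eCross A P i j := by
      unfold eCross; simp only [hB]
    simp only [Finset.sum_add_distrib, Finset.sum_sub_distrib]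
    rw [show (∑ u ∈ B i, ∑ v ∈ B j, (2 * A u v * q)) =
        2 * (∑ u ∈ B i, ∑ v ∈ B j, A u v) * q by
      simp_rw [Finset.mul_sum, Finset.sum_mul]]
    rw [show (∑ u ∈ B i, ∑ v ∈ B j, q) = (blockCard P i : ℝ) * ((blockCard P j : ℝ) * q) by
      simp only [Finset.sum_const, nsmul_eq_mul]; rfl]
    rw [hS]
    by_cases hz : (blockCard P i : ℝ) * (blockCard P j : ℝ) = 0
    · have he : eCross A P i j = 0 := by
        rw [← hS]
        rcases mul_eq_zero.mp hz with h | h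
        · have hBi : B i = ∅ := Finset.card_eq_zero.mp (by exact_mod_cast h)
          rw [hBi]; simp
        · have hBj : B j = ∅ := Finset.card_eq_zero.mp (by exact_mod_cast h)
          simp [hBj]
      rcases mul_eq_zero.mp hz with h | h <;> simp [he, hq, h]
    · rw [hq]
      have hi : (blockCard P i : ℝ) ≠ 0 := left_ne_zero_of_mul hz
      have hj : (blockCard P j : ℝ) ≠ 0 := right_ne_zero_of_mul hz
      field_simp
      ring
  -- combine
  rw [hRE]
  have hsplit : ∀ i : Fin k,
      (∑ j : Fin k, ∑ u ∈ B i, ∑ v ∈ B j, (A u v + Abar A P u v - 2 * A u v * Abar A P u v))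
      = (4 * eIn A P i - 4 * (eIn A P i) ^ 2 / ((blockCard P i).choose 2 : ℝ))
        + ∑ j ∈ Finset.univ.erase i,
            (2 * eCross A P i j
              - 2 * (eCross A P i j) ^ 2 / ((blockCard P i : ℝ) * (blockCard P j : ℝ))) := by
    intro i
    rw [← Finset.add_sum_erase Finset.univ _ (Finset.mem_univ i), hdiagterm i]
    congr 1
    exact Finset.sum_congr rfl fun j hj => hcrossterm i j (Finset.mem_erase.mp hj).1
  rw [Finset.sum_congr rfl fun i _ => hsplit i, Finset.sum_add_distrib]
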